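/- Fix M > 0 and b > 0, and let μ and ν be Borel probability measures on [0,M]. Write opt(μ) = inf_{x ∈ [0,M]} S(x,μ). Then: (i) opt(μ) − opt(ν) ≤ 2·√(b·d_W(μ,ν)) + d_W(μ,ν); (ii) for every δ > 0, if x_ν ∈ [0,M] satisfies S(x_ν,ν) = opt(ν) and p = min(x_ν + δ, M), then S(p,μ) − opt(ν) ≤ b·d_W(μ,ν)/δ + d_W(μ,ν) + δ. -/

import Mathlib

open MeasureTheory

noncomputable section

/-- Cumulative distribution function `F(t) = μ([0,t])`. -/
def cdf0 (μ : Measure ℝ) (t : ℝ) : ℝ := (μ (Set.Icc 0 t)).toReal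

/-- Wasserstein-1 distance between measures on `[0,M]`: `∫₀^M |F(t) - H(t)| dt`. -/
def wassDist (M : ℝ) (μ ν : Measure ℝ) : ℝ :=
  ∫ t in Set.Icc (0:ℝ) M, |cdf0 μ t - cdf0 ν t|

/-- Expected ski-rental cost with buying cost `b`. -/
def skiCost (b x : ℝ) (μ : Measure ℝ) : ℝ :=
  ∫ ξ, (if ξ ≤ x then ξ else b + x) ∂μ

/-- Optimal ski-rental cost `opt(μ) = inf_{x ∈ [0,M]} S(x,μ)`. -/
def optSki (b M : ℝ) (μ : Measure ℝ) : ℝ := ⨅ x : Set.Icc (0:ℝ) M, skiCost b x.1 μ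

open Set

lemma cdf0_nonneg (μ : Measure ℝ) (t : ℝ) : 0 ≤ cdf0 μ t := ENNReal.toReal_nonneg

lemma cdf0_mono (μ : Measure ℝ) [IsProbabilityMeasure μ] : Monotone (cdf0 μ) := by
  intro s t hst
  exact ENNReal.toReal_mono (measure_ne_top μ _) (measure_mono (Icc_subset_Icc_right hst))

lemma cdf0_le_one (μ : Measure ℝ) [IsProbabilityMeasure μ] (t : ℝ) : cdf0 μ t ≤ 1 := by
  have h : μ (Icc 0 t) ≤ 1 := prob_le_one
  simpa [cdf0] using ENNReal.toReal_mono ENNReal.one_ne_top h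

lemma isFiniteRestrict (a c : ℝ) : IsFiniteMeasure (volume.restrict (Icc a c)) := by
  constructor
  rw [Measure.restrict_apply_univ, Real.volume_Icc]
  exact ENNReal.ofReal_lt_top

lemma integrableOn_of_bounded {g : ℝ → ℝ} (hg : Measurable g) {C : ℝ}
    (hC : ∀ t, |g t| ≤ C) (a c : ℝ) : IntegrableOn g (Icc a c) := by
  haveI := isFiniteRestrict a c
  exact (integrable_const C).mono' hg.aestronglyMeasurable (ae_of_all _ hC)

lemma cdf0_measurable (μ : Measure ℝ) [IsProbabilityMeasure μ] : Measurable (cdf0 μ) :=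
  (cdf0_mono μ).measurable

lemma absdiff_integrableOn (μ ν : Measure ℝ) [IsProbabilityMeasure μ] [IsProbabilityMeasure ν]
    (a c : ℝ) : IntegrableOn (fun t => |cdf0 μ t - cdf0 ν t|) (Icc a c) := by
  apply integrableOn_of_bounded (((cdf0_measurable μ).sub (cdf0_measurable ν)).abs) (C := 1)
  intro t
  rw [abs_abs]
  have h1 := cdf0_nonneg μ t; have h2 := cdf0_nonneg ν t
  have h3 := cdf0_le_one μ t; have h4 := cdf0_le_one ν t
  rw [abs_le, Pi.sub_apply]; constructor <;> linarith

lemma wassDist_nonneg (M : ℝ) (μ ν : Measure ℝ) : 0 ≤ wassDist M μ ν :=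
  integral_nonneg fun t => abs_nonneg _

lemma setIntegral_absdiff_le (M : ℝ) (μ ν : Measure ℝ) [IsProbabilityMeasure μ]
    [IsProbabilityMeasure ν] {a c : ℝ} (h : Icc a c ⊆ Icc 0 M) :
    ∫ t in Icc a c, |cdf0 μ t - cdf0 ν t| ≤ wassDist M μ ν := by
  apply setIntegral_mono_set (absdiff_integrableOn μ ν 0 M)
    (ae_of_all _ fun t => abs_nonneg _) (HasSubset.Subset.eventuallyLE h)

lemma ae_mem_Icc {M : ℝ} {μ : Measure ℝ} [IsProbabilityMeasure μ]
    (hμ1 : μ (Icc 0 M) = 1) : ∀ᵐ ξ ∂μ, ξ ∈ Icc (0:ℝ) M := by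
  rw [ae_iff]
  have : μ (Icc 0 M)ᶜ = 0 := by
    rw [measure_compl measurableSet_Icc (measure_ne_top _ _), hμ1, measure_univ]
    simp
  simpa [Set.compl_def] using this

lemma skiCost_nonneg {M b x : ℝ} {μ : Measure ℝ} [IsProbabilityMeasure μ]
    (hb : 0 < b) (hx : 0 ≤ x) (hμ1 : μ (Icc 0 M) = 1) : 0 ≤ skiCost b x μ := by
  apply integral_nonneg_of_ae
  filter_upwards [ae_mem_Icc hμ1] with ξ hξ
  by_cases h : ξ ≤ x <;> simp [h] <;> linarith [hξ.1]

lemma skiCost_formula {M b x : ℝ} {μ : Measure ℝ} [IsProbabilityMeasure μ]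
    (hb : 0 < b) (hμ1 : μ (Icc 0 M) = 1) (hx : x ∈ Icc (0:ℝ) M) :
    skiCost b x μ = b + x - b * cdf0 μ x - ∫ t in Icc (0:ℝ) x, cdf0 μ t := by
  have hx0 : 0 ≤ x := hx.1
  set g : ℝ → ℝ := (Icc (0:ℝ) x).indicator (fun ξ => b + x - ξ) with hg
  have key : ∀ᵐ ξ ∂μ, (if ξ ≤ x then ξ else b + x) = (b + x) - g ξ := by
    filter_upwards [ae_mem_Icc hμ1] with ξ hξ
    by_cases h : ξ ≤ x
    · have hmem : ξ ∈ Icc (0:ℝ) x := ⟨hξ.1, h⟩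
      simp [hg, indicator_of_mem hmem, h]
    · have hmem : ξ ∉ Icc (0:ℝ) x := fun hc => h hc.2
      simp [hg, indicator_of_notMem hmem, h]
  have hgmeas : Measurable g :=
    ((measurable_const.sub measurable_id)).indicator measurableSet_Icc
  have hgint : Integrable g μ := by
    apply (integrable_const (b + x)).mono' hgmeas.aestronglyMeasurable
    filter_upwards with ξ
    by_cases hmem : ξ ∈ Icc (0:ℝ) x
    · rw [hg, indicator_of_mem hmem]
      have := hmem.1; have := hmem.2
      rw [Real.norm_eq_abs, abs_le]; constructor <;> linarith
    · rw [hg, indicator_of_notMem hmem]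
      simp; linarith
  have h1 : skiCost b x μ = (b + x) - ∫ ξ, g ξ ∂μ := by
    rw [skiCost, integral_congr_ae key, integral_sub (integrable_const _) hgint]
    simp
  have h2 : ∫ ξ, g ξ ∂μ = ∫ ξ in Icc (0:ℝ) x, (b + (x - ξ)) ∂μ := by
    rw [hg, integral_indicator measurableSet_Icc]
    congr 1; funext ξ; ring
  have i1 : IntegrableOn (fun _ : ℝ => b) (Icc 0 x) μ := (integrable_const b).integrableOn
  have i2 : IntegrableOn (fun ξ => x - ξ) (Icc 0 x) μ := by
    apply (integrable_const x).mono'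
      (by fun_prop : Measurable fun ξ : ℝ => x - ξ).aestronglyMeasurable
    filter_upwards [ae_restrict_mem measurableSet_Icc] with ξ hξ
    rw [Real.norm_eq_abs, abs_le]
    constructor <;> [linarith [hξ.2]; linarith [hξ.1]]
  have h3 : ∫ ξ in Icc (0:ℝ) x, (b + (x - ξ)) ∂μ =
      b * cdf0 μ x + ∫ ξ in Icc (0:ℝ) x, (x - ξ) ∂μ := by
    rw [integral_add i1 i2, setIntegral_const]
    rw [cdf0, smul_eq_mul, mul_comm]; rfl
  -- Fubini step
  have fub : ∫ ξ in Icc (0:ℝ) x, (x - ξ) ∂μ = ∫ t in Icc (0:ℝ) x, cdf0 μ t := by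
    haveI := isFiniteRestrict (0:ℝ) x
    set f : ℝ → ℝ → ℝ := fun ξ t => if ξ ≤ t then (1:ℝ) else 0 with hf
    have hint : Integrable (Function.uncurry f)
        ((μ.restrict (Icc 0 x)).prod (volume.restrict (Icc 0 x))) := by
      have hm : Measurable (Function.uncurry f) :=
        Measurable.ite (measurableSet_le measurable_fst measurable_snd) measurable_const measurable_const
      apply (integrable_const (1:ℝ)).mono' hm.aestronglyMeasurable
      filter_upwards with p
      by_cases h : p.1 ≤ p.2 <;> simp [Function.uncurry, hf, h]
    have step1 : ∀ ξ ∈ Icc (0:ℝ) x, (∫ t in Icc (0:ℝ) x, f ξ t) = x - ξ := by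
      intro ξ hξ
      have he : (fun t => f ξ t) = (Ici ξ).indicator (fun _ => (1:ℝ)) := by
        funext t; by_cases h : ξ ≤ t <;> simp [hf, h, indicator]
      have hset : Icc (0:ℝ) x ∩ Ici ξ = Icc ξ x := by
        ext t
        simp only [mem_inter_iff, mem_Icc, mem_Ici]
        constructor
        · rintro ⟨⟨_, h2⟩, h3⟩; exact ⟨h3, h2⟩
        · rintro ⟨h1, h2⟩; exact ⟨⟨le_trans hξ.1 h1, h2⟩, h1⟩
      rw [he, setIntegral_indicator measurableSet_Ici, hset,
        setIntegral_const, smul_eq_mul, mul_one, Real.volume_real_Icc_of_le hξ.2]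
    have step2 : ∀ t ∈ Icc (0:ℝ) x, (∫ ξ in Icc (0:ℝ) x, f ξ t ∂μ) = cdf0 μ t := by
      intro t ht
      have he : (fun ξ => f ξ t) = (Iic t).indicator (fun _ => (1:ℝ)) := by
        funext ξ; by_cases h : ξ ≤ t <;> simp [hf, h, indicator]
      have hset : Icc (0:ℝ) x ∩ Iic t = Icc (0:ℝ) t := by
        ext s
        simp only [mem_inter_iff, mem_Icc, mem_Iic]
        constructor
        · rintro ⟨⟨h1, _⟩, h3⟩; exact ⟨h1, h3⟩
        · rintro ⟨h1, h2⟩; exact ⟨⟨h1, le_trans h2 ht.2⟩, h2⟩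
      rw [he, setIntegral_indicator measurableSet_Iic, hset,
        setIntegral_const, smul_eq_mul, mul_one, cdf0]; rfl
    calc ∫ ξ in Icc (0:ℝ) x, (x - ξ) ∂μ
        = ∫ ξ in Icc (0:ℝ) x, (∫ t in Icc (0:ℝ) x, f ξ t) ∂μ :=
          (setIntegral_congr_fun measurableSet_Icc fun ξ hξ => (step1 ξ hξ).symm)
      _ = ∫ t in Icc (0:ℝ) x, (∫ ξ in Icc (0:ℝ) x, f ξ t ∂μ) :=
          integral_integral_swap hint
      _ = ∫ t in Icc (0:ℝ) x, cdf0 μ t :=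
          setIntegral_congr_fun measurableSet_Icc step2
  rw [h1, h2, h3, fub]; ring


lemma ski_key {M b : ℝ} (hM : 0 < M) (hb : 0 < b)
    (μ ν : Measure ℝ) [IsProbabilityMeasure μ] [IsProbabilityMeasure ν]
    (hμ : μ (Set.Icc 0 M) = 1) (hν : ν (Set.Icc 0 M) = 1)
    {x δ : ℝ} (hx : x ∈ Icc (0:ℝ) M) (hδ : 0 < δ) :
    skiCost b (min (x + δ) M) μ ≤
      skiCost b x ν + b * wassDist M μ ν / δ + wassDist M μ ν + δ := by
  set W := wassDist M μ ν with hW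
  have hW0 : 0 ≤ W := wassDist_nonneg M μ ν
  set p := min (x + δ) M with hpdef
  have hp : p ∈ Icc (0:ℝ) M := ⟨le_min (by linarith [hx.1]) hM.le, min_le_right _ _⟩
  have hxp : x ≤ p := le_min (by linarith) hx.2
  have hpd : p ≤ x + δ := min_le_left _ _
  rw [skiCost_formula hb hμ hp, skiCost_formula hb hν hx]
  -- B) ∫_{0..x} H - ∫_{0..p} F ≤ W
  have hFint : IntegrableOn (cdf0 μ) (Icc 0 p) volume :=
    integrableOn_of_bounded (cdf0_measurable μ) (C := 1)
      (fun t => abs_le.mpr ⟨by linarith [cdf0_nonneg μ t], cdf0_le_one μ t⟩) _ _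
  have hHint : IntegrableOn (cdf0 ν) (Icc 0 x) volume :=
    integrableOn_of_bounded (cdf0_measurable ν) (C := 1)
      (fun t => abs_le.mpr ⟨by linarith [cdf0_nonneg ν t], cdf0_le_one ν t⟩) _ _
  have hFx : IntegrableOn (cdf0 μ) (Icc 0 x) volume :=
    hFint.mono_set (Icc_subset_Icc_right hxp)
  have hBsub : ∫ t in Icc (0:ℝ) x, cdf0 μ t ≤ ∫ t in Icc (0:ℝ) p, cdf0 μ t :=
    setIntegral_mono_set hFint (ae_of_all _ fun t => cdf0_nonneg μ t)
      (HasSubset.Subset.eventuallyLE (Icc_subset_Icc_right hxp))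
  have hB1 : (∫ t in Icc (0:ℝ) x, cdf0 ν t) - ∫ t in Icc (0:ℝ) x, cdf0 μ t ≤ W := by
    rw [← integral_sub hHint hFx]
    calc ∫ t in Icc (0:ℝ) x, (cdf0 ν t - cdf0 μ t)
        ≤ ∫ t in Icc (0:ℝ) x, |cdf0 μ t - cdf0 ν t| := by
          apply setIntegral_mono ((hHint.sub hFx)) (absdiff_integrableOn μ ν 0 x)
          intro t
          simp only [Pi.sub_apply]
          rw [abs_sub_comm]
          exact le_abs_self _
      _ ≤ W := setIntegral_absdiff_le M μ ν (Icc_subset_Icc_right hx.2)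
  -- C) H x - F p ≤ W / δ
  have hC : cdf0 ν x - cdf0 μ p ≤ W / δ := by
    rcases le_or_gt (x + δ) M with hcase | hcase
    · have hpeq : p = x + δ := min_eq_left hcase
      rw [le_div_iff₀ hδ]
      have hvol : (volume (Icc x p)).toReal = δ := by
        rw [Real.volume_Icc, ENNReal.toReal_ofReal (by linarith)]
        rw [hpeq]; ring
      have hconst : ∫ _t in Icc x p, (cdf0 ν x - cdf0 μ p) = δ * (cdf0 ν x - cdf0 μ p) := by
        rw [setIntegral_const, smul_eq_mul, measureReal_def, hvol]
      have hmono : ∫ _t in Icc x p, (cdf0 ν x - cdf0 μ p) ≤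
          ∫ t in Icc x p, |cdf0 μ t - cdf0 ν t| := by
        apply setIntegral_mono_on (integrableOn_const ?_)
          (absdiff_integrableOn μ ν x p) measurableSet_Icc
        · intro t ht
          have h1 : cdf0 ν x ≤ cdf0 ν t := cdf0_mono ν ht.1
          have h2 : cdf0 μ t ≤ cdf0 μ p := cdf0_mono μ ht.2
          have h3 : cdf0 ν t - cdf0 μ t ≤ |cdf0 μ t - cdf0 ν t| := by
            rw [abs_sub_comm]; exact le_abs_self _
          linarith
        · rw [Real.volume_Icc]; exact ENNReal.ofReal_lt_top.ne
      have hsub : ∫ t in Icc x p, |cdf0 μ t - cdf0 ν t| ≤ W :=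
        setIntegral_absdiff_le M μ ν (Icc_subset_Icc hx.1 hp.2)
      calc (cdf0 ν x - cdf0 μ p) * δ = δ * (cdf0 ν x - cdf0 μ p) := by ring
        _ = ∫ _t in Icc x p, (cdf0 ν x - cdf0 μ p) := hconst.symm
        _ ≤ W := le_trans hmono hsub
    · have hpeq : p = M := min_eq_right (by linarith)
      have hFM : cdf0 μ p = 1 := by rw [hpeq, cdf0, hμ, ENNReal.toReal_one]
      have := cdf0_le_one ν x
      have : cdf0 ν x - cdf0 μ p ≤ 0 := by rw [hFM]; linarith
      exact le_trans this (div_nonneg hW0 hδ.le)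
  have hCb : b * cdf0 ν x - b * cdf0 μ p ≤ b * W / δ := by
    calc b * cdf0 ν x - b * cdf0 μ p = b * (cdf0 ν x - cdf0 μ p) := by ring
      _ ≤ b * (W / δ) := mul_le_mul_of_nonneg_left hC hb.le
      _ = b * W / δ := by ring
  have hA : p - x ≤ δ := by linarith
  linarith [hCb, hA, hB1, hBsub]

lemma le_of_forall_pos_le_add' {a c : ℝ} (h : ∀ ε : ℝ, 0 < ε → a ≤ c + ε) : a ≤ c := by
  by_contra hcon
  push_neg at hcon
  have := h ((a - c) / 2) (by linarith)
  linarith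


/-- Ski rental under Wasserstein heterogeneity: (i) comparison of optimal costs;
(ii) cost of the `δ`-inflated SAA decision. -/
theorem ski_rental_opt_and_inflated
    (M b : ℝ) (hM : 0 < M) (hb : 0 < b)
    (μ ν : Measure ℝ) [IsProbabilityMeasure μ] [IsProbabilityMeasure ν]
    (hμ : μ (Set.Icc 0 M) = 1) (hν : ν (Set.Icc 0 M) = 1) :
    optSki b M μ - optSki b M ν ≤
      2 * Real.sqrt (b * wassDist M μ ν) + wassDist M μ ν
    ∧
    ∀ δ : ℝ, 0 < δ → ∀ xν ∈ Set.Icc (0:ℝ) M, skiCost b xν ν = optSki b M ν →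
      skiCost b (min (xν + δ) M) μ - optSki b M ν ≤
        b * wassDist M μ ν / δ + wassDist M μ ν + δ := by
  have hW0 : 0 ≤ wassDist M μ ν := wassDist_nonneg M μ ν
  haveI hne : Nonempty (Set.Icc (0:ℝ) M) := ⟨⟨0, left_mem_Icc.mpr hM.le⟩⟩
  have hbdd : BddBelow (Set.range fun x : Set.Icc (0:ℝ) M => skiCost b x.1 μ) := by
    refine ⟨0, ?_⟩
    rintro _ ⟨x, rfl⟩
    exact skiCost_nonneg hb x.2.1 hμ
  constructor
  · -- part (i)
    rw [sub_le_iff_le_add, add_comm]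
    apply le_of_forall_pos_le_add'
    intro ε hε
    have hlt : optSki b M ν < optSki b M ν + ε / 2 := by linarith
    obtain ⟨x, hxlt⟩ := exists_lt_of_ciInf_lt (f := fun x : Set.Icc (0:ℝ) M => skiCost b x.1 ν)
      (by exact hlt)
    set W := wassDist M μ ν with hWdef
    rcases eq_or_lt_of_le hW0 with hWeq | hWpos
    · -- W = 0
      have hkey := ski_key hM hb μ ν hμ hν x.2 (show (0:ℝ) < ε / 2 by linarith)
      have hple : optSki b M μ ≤ skiCost b (min (x.1 + ε / 2) M) μ := by
        have hpm : min (x.1 + ε / 2) M ∈ Set.Icc (0:ℝ) M :=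
          ⟨le_min (by linarith [x.2.1]) hM.le, min_le_right _ _⟩
        exact ciInf_le hbdd ⟨_, hpm⟩
      have hsqrt : 0 ≤ Real.sqrt (b * W) := Real.sqrt_nonneg _
      rw [← hWdef, ← hWeq] at hkey
      simp only [mul_zero, zero_div, add_zero] at hkey
      linarith [hple, hkey, hxlt.le, hsqrt]
    · -- W > 0
      set δ := Real.sqrt (b * W) with hδdef
      have hδpos : 0 < δ := Real.sqrt_pos.mpr (mul_pos hb hWpos)
      have hδsq : δ * δ = b * W := Real.mul_self_sqrt (mul_pos hb hWpos).le
      have hdiv : b * W / δ = δ := by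
        rw [← hδsq]; field_simp
      have hkey := ski_key hM hb μ ν hμ hν x.2 hδpos
      have hpm : min (x.1 + δ) M ∈ Set.Icc (0:ℝ) M :=
        ⟨le_min (by linarith [x.2.1]) hM.le, min_le_right _ _⟩
      have hple : optSki b M μ ≤ skiCost b (min (x.1 + δ) M) μ := ciInf_le hbdd ⟨_, hpm⟩
      rw [← hWdef, hdiv] at hkey
      calc optSki b M μ ≤ skiCost b x.1 ν + δ + W + δ := le_trans hple hkey
        _ ≤ optSki b M ν + (2 * Real.sqrt (b * W) + W) + ε := by
            rw [hδdef]; linarith [hxlt.le]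
  · -- part (ii)
    intro δ hδ xν hxν hopt
    have hkey := ski_key hM hb μ ν hμ hν hxν hδ
    rw [hopt] at hkey
    linarith

end
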